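/- Let N ≥ 2 and let m_1, …, m_N satisfy 0 < m_i < 1 for every i and m̄ := (1/N) Σ_{i=1}^N m_i > 1 − 2/N. Fix i ∈ {1,…,N} and let ζ : ℝ^N → [0,∞) be a C² function such that the function x ↦ (ζ(x)^{−m_i} |∂²_{x_i x_i} ζ(x)|)^{1/(1−m_i)}, defined to be 0 at points where ζ(x) = 0 (assuming ∂²_{x_i x_i} ζ = 0 wherever ζ = 0), is integrable on ℝ^N with integral K. For n > 0 define ζ_n(x) := ζ(n^{−(1−m_1)} x_1, …, n^{−(1−m_N)} x_N). Then ∫_{ℝ^N} (ζ_n(x)^{−m_i} |∂²_{x_i x_i} ζ_n(x)|)^{1/(1−m_i)} dx = n^{−γ} K with γ := 2 − N(1 − m̄), and γ > 0; in particular these integrals tend to 0 as n → ∞. -/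

import Mathlib

open MeasureTheory

/-- Second partial derivative of `f` in the `i`-th coordinate direction. -/
noncomputable def pd2 {N : ℕ} (i : Fin N) (f : (Fin N → ℝ) → ℝ) (x : Fin N → ℝ) : ℝ :=
  deriv (deriv (fun s => f (Function.update x i s))) (x i)

/-- The integrand `(ζ^{-m_i} |∂²_{x_i x_i} ζ|)^{1/(1-m_i)}`, set to `0` where `ζ = 0`. -/
noncomputable def cutoffIntegrand {N : ℕ} (mi : ℝ) (i : Fin N)
    (f : (Fin N → ℝ) → ℝ) (x : Fin N → ℝ) : ℝ :=
  if f x = 0 then 0 else (f x ^ (-mi) * |pd2 i f x|) ^ (1 / (1 - mi))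

lemma pd2_comp_scale {N : ℕ} (i : Fin N) (c : Fin N → ℝ) (ζ : (Fin N → ℝ) → ℝ)
    (hζ : ContDiff ℝ 2 ζ) (x : Fin N → ℝ) :
    pd2 i (fun x => ζ (fun j => c j * x j)) x
      = (c i) ^ 2 * pd2 i ζ (fun j => c j * x j) := by
  classical
  set y : Fin N → ℝ := fun j => c j * x j with hy
  set F : ℝ → ℝ := fun t => ζ (Function.update y i t) with hFdef
  have hF : ContDiff ℝ 2 F := hζ.comp (contDiff_update 2 y i)
  have hFd : Differentiable ℝ F := hF.differentiable (by norm_num)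
  have hF' : ContDiff ℝ 1 (deriv F) := by
    have h2 : (2 : WithTop ℕ∞) = 1 + 1 := by norm_num
    rw [h2, contDiff_succ_iff_deriv] at hF
    exact hF.2.2
  have hF'd : Differentiable ℝ (deriv F) := hF'.differentiable (by norm_num)
  have hupd : ∀ s : ℝ,
      (fun j => c j * Function.update x i s j) = Function.update y i (c i * s) := by
    intro s; funext j
    rcases eq_or_ne j i with rfl | h
    · simp
    · simp [Function.update_of_ne h, hy]
  have key1 : (fun s => ζ (fun j => c j * Function.update x i s j))
      = fun s => F (c i * s) := by
    funext s; rw [hupd s]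
  have chain : ∀ (G : ℝ → ℝ), Differentiable ℝ G → ∀ s : ℝ,
      deriv (fun t => G (c i * t)) s = c i * deriv G (c i * s) := by
    intro G hG s
    have h1 : HasDerivAt (fun t : ℝ => c i * t) (c i) s := by
      simpa using (hasDerivAt_id s).const_mul (c i)
    have h2 := ((hG (c i * s)).hasDerivAt.comp s h1)
    have h3 : HasDerivAt (fun t => G (c i * t)) (deriv G (c i * s) * c i) s := h2
    rw [h3.deriv]; ring
  have key2 : deriv (fun s => F (c i * s)) = fun s => c i * deriv F (c i * s) := by
    funext s; exact chain F hFd s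
  have key3 : deriv (fun s => deriv F (c i * s)) (x i)
      = c i * deriv (deriv F) (c i * x i) := chain (deriv F) hF'd (x i)
  have hgoal : pd2 i (fun x => ζ (fun j => c j * x j)) x
      = deriv (deriv (fun s => ζ (fun j => c j * Function.update x i s j))) (x i) := rfl
  rw [hgoal, key1, key2]
  rw [deriv_const_mul_field, key3]
  have hrhs : pd2 i ζ y = deriv (deriv F) (c i * x i) := rfl
  rw [hrhs]; ring

lemma integral_cutoff_comp_scale {N : ℕ} (i : Fin N) (mi : ℝ) (hmi1 : mi < 1)
    (ζ : (Fin N → ℝ) → ℝ) (hζnn : ∀ x, 0 ≤ ζ x) (hζC2 : ContDiff ℝ 2 ζ)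
    (hint : Integrable (cutoffIntegrand mi i ζ))
    (c : Fin N → ℝ) (hcpos : ∀ j, 0 < c j) :
    (∫ x, cutoffIntegrand mi i (fun x => ζ (fun j => c j * x j)) x)
      = ((c i) ^ 2) ^ (1 / (1 - mi)) * ((∏ j, c j)⁻¹ * ∫ x, cutoffIntegrand mi i ζ x) := by
  classical
  have h1mi : (0:ℝ) < 1 - mi := by linarith
  -- pointwise identity
  have hpt : ∀ x, cutoffIntegrand mi i (fun x => ζ (fun j => c j * x j)) x
      = ((c i) ^ 2) ^ (1 / (1 - mi)) * cutoffIntegrand mi i ζ (fun j => c j * x j) := by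
    intro x
    simp only [cutoffIntegrand]
    by_cases h0 : ζ (fun j => c j * x j) = 0
    · simp [h0]
    · rw [if_neg h0, if_neg h0, pd2_comp_scale i c ζ hζC2 x]
      have ha : 0 ≤ ζ (fun j => c j * x j) ^ (-mi) := Real.rpow_nonneg (hζnn _) _
      have hb : 0 ≤ |pd2 i ζ (fun j => c j * x j)| := abs_nonneg _
      rw [abs_mul, abs_of_nonneg (sq_nonneg (c i))]
      rw [show ζ (fun j => c j * x j) ^ (-mi) * ((c i) ^ 2 * |pd2 i ζ (fun j => c j * x j)|)
          = (c i) ^ 2 * (ζ (fun j => c j * x j) ^ (-mi) * |pd2 i ζ (fun j => c j * x j)|) by ring]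
      rw [Real.mul_rpow (by positivity) (mul_nonneg ha hb)]
  -- change of variables
  set L := Matrix.toLin' (Matrix.diagonal c) with hL
  have hLapp : ∀ x : Fin N → ℝ, L x = fun j => c j * x j := by
    intro x; funext j
    simp [hL, Matrix.toLin'_apply, Matrix.mulVec_diagonal]
  have hdet : LinearMap.det L = ∏ j, c j := by
    rw [hL, LinearMap.det_toLin', Matrix.det_diagonal]
  have hdetpos : 0 < ∏ j, c j := Finset.prod_pos (fun j _ => hcpos j)
  have hmap : Measure.map L volume = ENNReal.ofReal |(∏ j, c j)⁻¹| • volume := by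
    have := Measure.map_linearMap_addHaar_eq_smul_addHaar (volume : Measure (Fin N → ℝ))
      (f := L) (by rw [hdet]; exact hdetpos.ne')
    rwa [hdet] at this
  have hgm : AEStronglyMeasurable (cutoffIntegrand mi i ζ) (Measure.map L volume) := by
    rw [hmap]
    exact hint.aestronglyMeasurable.mono_ac Measure.smul_absolutelyContinuous
  have hLmeas : AEMeasurable L volume :=
    L.continuous_of_finiteDimensional.measurable.aemeasurable
  have hcov : (∫ x, cutoffIntegrand mi i ζ (L x))
      = (∏ j, c j)⁻¹ * ∫ x, cutoffIntegrand mi i ζ x := by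
    rw [← integral_map hLmeas hgm, hmap, integral_smul_measure,
      ENNReal.toReal_ofReal (abs_nonneg _), abs_of_pos (inv_pos.2 hdetpos), smul_eq_mul]
  calc (∫ x, cutoffIntegrand mi i (fun x => ζ (fun j => c j * x j)) x)
      = ∫ x, ((c i) ^ 2) ^ (1 / (1 - mi)) * cutoffIntegrand mi i ζ (L x) := by
        congr 1; funext x; rw [hpt x, hLapp x]
    _ = ((c i) ^ 2) ^ (1 / (1 - mi)) * ∫ x, cutoffIntegrand mi i ζ (L x) :=
        integral_const_mul _ _
    _ = _ := by rw [hcov]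

theorem cutoff_scaling (N : ℕ) (hN : 2 ≤ N) (m : Fin N → ℝ)
    (hm : ∀ i, 0 < m i ∧ m i < 1)
    (mbar : ℝ) (hmbar : mbar = (1 / (N : ℝ)) * ∑ i, m i)
    (hH2 : 1 - 2 / (N : ℝ) < mbar)
    (i : Fin N) (ζ : (Fin N → ℝ) → ℝ)
    (hζnn : ∀ x, 0 ≤ ζ x) (hζC2 : ContDiff ℝ 2 ζ)
    (hζ0 : ∀ x, ζ x = 0 → pd2 i ζ x = 0)
    (K : ℝ) (hKint : Integrable (cutoffIntegrand (m i) i ζ))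
    (hK : (∫ x, cutoffIntegrand (m i) i ζ x) = K)
    (γ : ℝ) (hγ : γ = 2 - (N : ℝ) * (1 - mbar)) :
    0 < γ ∧
    ∀ n : ℝ, 0 < n →
      (∫ x, cutoffIntegrand (m i) i
          (fun x => ζ (fun j => n ^ (-(1 - m j)) * x j)) x) = n ^ (-γ) * K := by
  have hN0 : (0:ℝ) < N := by positivity
  have hN0' : (N:ℝ) ≠ 0 := hN0.ne'
  constructor
  · rw [hγ]
    have h := mul_lt_mul_of_pos_left hH2 hN0
    have h2 : (N:ℝ) * (1 - 2 / N) = N - 2 := by field_simp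
    nlinarith
  · intro n hn
    have hmi1 := (hm i).2
    have h1mi : (0:ℝ) < 1 - m i := by linarith
    have hcpos : ∀ j, (0:ℝ) < n ^ (-(1 - m j)) := fun j => Real.rpow_pos_of_pos hn _
    have hmain := integral_cutoff_comp_scale i (m i) hmi1 ζ hζnn hζC2 hKint
      (fun j => n ^ (-(1 - m j))) hcpos
    rw [hmain, hK]
    -- compute the two scalar factors
    have hfac1 : ((n ^ (-(1 - m i)) : ℝ) ^ 2) ^ (1 / (1 - m i)) = n ^ (-2 : ℝ) := by
      rw [← Real.rpow_natCast (n ^ (-(1 - m i))) 2, ← Real.rpow_mul hn.le,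
        ← Real.rpow_mul hn.le]
      congr 1
      push_cast
      field_simp
    have hprod : (∏ j, n ^ (-(1 - m j)) : ℝ) = n ^ (∑ j, -(1 - m j)) :=
      (Real.rpow_sum_of_pos hn _ _).symm
    have hsum : (∑ j, -(1 - m j)) = (∑ j, m j) - N := by
      have : (∑ j, -(1 - m j)) = ∑ j : Fin N, (m j - 1) :=
        Finset.sum_congr rfl (fun j _ => by ring)
      rw [this, Finset.sum_sub_distrib]
      simp [Finset.card_univ]
    have hinv : ((∏ j, n ^ (-(1 - m j)) : ℝ))⁻¹ = n ^ ((N:ℝ) - ∑ j, m j) := by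
      rw [hprod, hsum, ← Real.rpow_neg hn.le]
      congr 1; ring
    rw [hfac1, hinv, ← mul_assoc, ← Real.rpow_add hn]
    congr 2
    rw [hγ, hmbar]
    field_simp
    ring
  done
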